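/- Given N functions α_i ∈ K∞ (continuous, strictly increasing, α_i(0) = 0, unbounded) and positive weights μ_i > 0, the function ᾱ(r) := max{ Σ_{i=1}^N α_i⁻¹(s_i) : s_i ≥ 0, Σ_{i=1}^N μ_i s_i = r } is well-defined (the maximum is attained) and is itself a K∞ function. -/

import Mathlib

open scoped NNReal

/-- A function `γ : ℝ≥0 → ℝ≥0` is of class `K∞` if it is continuous, strictly
increasing, vanishes at `0`, and is unbounded. -/
def IsKInf (γ : ℝ≥0 → ℝ≥0) : Prop :=
  Continuous γ ∧ StrictMono γ ∧ γ 0 = 0 ∧ Filter.Tendsto γ Filter.atTop Filter.atTop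

/-- The supremum of a jointly continuous function over a compact nonempty set is a
continuous function of the parameter. -/
lemma continuous_sSup_image_aux {Y : Type*} [MetricSpace Y]
    {K : Set Y} (hK : IsCompact K) (hne : K.Nonempty)
    {G : ℝ≥0 × Y → ℝ≥0} (hG : Continuous G) :
    Continuous fun r : ℝ≥0 => sSup ((fun s => G (r, s)) '' K) := by
  set M : ℝ≥0 → ℝ≥0 := fun x => sSup ((fun s => G (x, s)) '' K) with hM
  have hgr : ∀ r : ℝ≥0, IsGreatest ((fun s => G (r, s)) '' K) (M r) := fun r =>
    (hK.image (hG.comp (Continuous.prodMk_right r))).isGreatest_sSup (hne.image _)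
  rw [continuous_iff_continuousAt]
  intro r₀
  rw [Metric.continuousAt_iff]
  intro ε hε
  have hC : IsCompact ((Set.Icc (0:ℝ≥0) (r₀ + 1)) ×ˢ K) := isCompact_Icc.prod hK
  have hu := hC.uniformContinuousOn_of_continuous hG.continuousOn
  rw [Metric.uniformContinuousOn_iff] at hu
  obtain ⟨δ, hδ, hδ'⟩ := hu (ε / 2) (by linarith)
  refine ⟨min δ 1, by positivity, fun {r} hr => ?_⟩
  have hr1 : dist r r₀ < 1 := lt_of_lt_of_le hr (min_le_right _ _)
  have hrδ : dist r r₀ < δ := lt_of_lt_of_le hr (min_le_left _ _)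
  have hrmem : r ∈ Set.Icc (0:ℝ≥0) (r₀ + 1) := by
    refine ⟨zero_le, ?_⟩
    rw [NNReal.dist_eq] at hr1
    rw [← NNReal.coe_le_coe]
    push_cast
    have h := abs_lt.1 hr1
    linarith [h.1, h.2]
  have hr₀mem : r₀ ∈ Set.Icc (0:ℝ≥0) (r₀ + 1) := ⟨zero_le, le_self_add⟩
  have key : ∀ s ∈ K, dist (G (r, s)) (G (r₀, s)) < ε / 2 := by
    intro s hs
    apply hδ' (r, s) ⟨hrmem, hs⟩ (r₀, s) ⟨hr₀mem, hs⟩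
    rw [Prod.dist_eq]
    simp only [dist_self]
    exact max_lt hrδ hδ
  obtain ⟨s₁, hs₁, hv₁⟩ := (hgr r).1
  obtain ⟨s₂, hs₂, hv₂⟩ := (hgr r₀).1
  have h1 : (M r : ℝ) ≤ (M r₀ : ℝ) + ε / 2 := by
    have hk := key s₁ hs₁
    rw [NNReal.dist_eq] at hk
    have hk' := (abs_lt.1 hk).2
    have hub : G (r₀, s₁) ≤ M r₀ := (hgr r₀).2 ⟨s₁, hs₁, rfl⟩
    rw [← hv₁]
    have := NNReal.coe_le_coe.2 hub
    linarith
  have h2 : (M r₀ : ℝ) ≤ (M r : ℝ) + ε / 2 := by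
    have hk := key s₂ hs₂
    rw [NNReal.dist_eq] at hk
    have hk' := (abs_lt.1 hk).1
    have hub : G (r, s₂) ≤ M r := (hgr r).2 ⟨s₂, hs₂, rfl⟩
    rw [← hv₂]
    have := NNReal.coe_le_coe.2 hub
    linarith
  rw [NNReal.dist_eq, abs_lt]
  constructor <;> linarith

theorem stmt_3 {N : ℕ} (hN : 1 ≤ N) (α β : Fin N → ℝ≥0 → ℝ≥0)
    (hα : ∀ i, IsKInf (α i))
    (hβ : ∀ i, Function.LeftInverse (β i) (α i) ∧ Function.RightInverse (β i) (α i))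
    (μ : Fin N → ℝ≥0) (hμ : ∀ i, 0 < μ i) :
    ∃ barα : ℝ≥0 → ℝ≥0,
      (∀ r, IsGreatest
        {t | ∃ s : Fin N → ℝ≥0, (∑ i, μ i * s i = r) ∧ (∑ i, β i (s i) = t)}
        (barα r)) ∧ IsKInf barα := by
  -- the distinguished index
  set i0 : Fin N := ⟨0, hN⟩ with hi0
  -- basic properties of the inverses β i
  have hβe : ∀ i, β i = ⇑(StrictMono.orderIsoOfSurjective (α i) (hα i).2.1
      (hβ i).2.surjective).symm := by
    intro i
    funext x
    apply (StrictMono.orderIsoOfSurjective (α i) (hα i).2.1 (hβ i).2.surjective).injective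
    rw [OrderIso.apply_symm_apply]
    show α i (β i x) = x
    exact (hβ i).2 x
  have hβc : ∀ i, Continuous (β i) := by
    intro i; rw [hβe i]; exact OrderIso.continuous _
  have hβm : ∀ i, StrictMono (β i) := by
    intro i; rw [hβe i]; exact (StrictMono.orderIsoOfSurjective (α i) (hα i).2.1
      (hβ i).2.surjective).symm.strictMono
  have hβ0 : ∀ i, β i 0 = 0 := by
    intro i
    calc β i 0 = β i (α i 0) := by rw [(hα i).2.2.1]
    _ = 0 := (hβ i).1 0
  have hβtop : ∀ i, Filter.Tendsto (β i) Filter.atTop Filter.atTop := by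
    intro i
    exact Filter.tendsto_atTop_atTop_of_monotone (hβm i).monotone
      fun b => ⟨α i b, le_of_eq ((hβ i).1 b).symm⟩
  -- the distinguished direction
  set s₀ : Fin N → ℝ≥0 := fun i => if i = i0 then (μ i0)⁻¹ else 0 with hs₀
  have hs₀sum : ∑ i, μ i * s₀ i = 1 := by
    rw [Finset.sum_eq_single i0]
    · simp [hs₀, mul_inv_cancel₀ (hμ i0).ne']
    · intro b _ hb; simp [hs₀, hb]
    · simp
  -- the compact constraint set
  set K : Set (Fin N → ℝ≥0) := {s | ∑ i, μ i * s i = 1} with hKdef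
  have hKne : K.Nonempty := ⟨s₀, hs₀sum⟩
  have hsumc : Continuous fun s : Fin N → ℝ≥0 => ∑ i, μ i * s i :=
    continuous_finset_sum _ fun i _ => continuous_const.mul (continuous_apply i)
  have hKc : IsCompact K := by
    refine IsCompact.of_isClosed_subset
      (isCompact_univ_pi fun i => isCompact_Icc (a := (0:ℝ≥0)) (b := (μ i)⁻¹))
      (isClosed_eq hsumc continuous_const) ?_
    intro s hs i _
    refine ⟨zero_le, (NNReal.le_inv_iff_mul_le (hμ i).ne').2 ?_⟩
    rw [mul_comm]
    calc μ i * s i ≤ ∑ j, μ j * s j := by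
          exact Finset.single_le_sum (f := fun j => μ j * s j)
            (fun j _ => zero_le) (Finset.mem_univ i)
    _ = 1 := hs
  -- the objective
  set G : ℝ≥0 × (Fin N → ℝ≥0) → ℝ≥0 := fun p => ∑ i, β i (p.1 * p.2 i) with hGdef
  have hGc : Continuous G :=
    continuous_finset_sum _ fun i _ => (hβc i).comp
      (continuous_fst.mul ((continuous_apply i).comp continuous_snd))
  -- the candidate function
  set barα : ℝ≥0 → ℝ≥0 := fun r => sSup ((fun s => G (r, s)) '' K) with hbar
  -- the constraint set at level r is exactly the image of K
  have hT : ∀ r : ℝ≥0,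
      {t | ∃ s : Fin N → ℝ≥0, (∑ i, μ i * s i = r) ∧ (∑ i, β i (s i) = t)} =
        (fun s => G (r, s)) '' K := by
    intro r
    ext t
    simp only [Set.mem_setOf_eq, Set.mem_image]
    constructor
    · rintro ⟨s, hsum, rfl⟩
      by_cases hr : r = 0
      · subst hr
        have hz : ∀ i, s i = 0 := by
          intro i
          have h0 : μ i * s i = 0 :=
            (Finset.sum_eq_zero_iff.1 hsum) i (Finset.mem_univ i)
          exact (mul_eq_zero.1 h0).resolve_left (hμ i).ne'
        refine ⟨s₀, hs₀sum, ?_⟩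
        simp [hGdef, hz, hβ0]
      · refine ⟨fun i => s i / r, ?_, ?_⟩
        · show ∑ i, μ i * (s i / r) = 1
          have : ∀ i, μ i * (s i / r) = (μ i * s i) / r := fun i => (mul_div_assoc (μ i) (s i) r).symm
          simp only [this]
          rw [← Finset.sum_div, hsum, div_self hr]
        · show ∑ i, β i (r * (s i / r)) = ∑ i, β i (s i)
          refine Finset.sum_congr rfl fun i _ => ?_
          rw [mul_comm, div_mul_cancel₀ _ hr]
    · rintro ⟨s, hs, rfl⟩
      refine ⟨fun i => r * s i, ?_, rfl⟩
      calc ∑ i, μ i * (r * s i) = r * ∑ i, μ i * s i := by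
            rw [Finset.mul_sum]; exact Finset.sum_congr rfl fun i _ => mul_left_comm _ _ _
      _ = r := by rw [hs, mul_one]
  have hgr : ∀ r : ℝ≥0,
      IsGreatest {t | ∃ s : Fin N → ℝ≥0,
        (∑ i, μ i * s i = r) ∧ (∑ i, β i (s i) = t)} (barα r) := by
    intro r
    rw [hT r]
    exact (hKc.image (hGc.comp (Continuous.prodMk_right r))).isGreatest_sSup (hKne.image _)
  refine ⟨barα, hgr, ?_, ?_, ?_, ?_⟩
  -- continuity
  · exact continuous_sSup_image_aux hKc hKne hGc
  -- strict monotonicity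
  · intro a b hab
    obtain ⟨s, hsum, hval⟩ := (hgr a).1
    set d : ℝ≥0 := b - a with hd
    have hdpos : 0 < d := tsub_pos_of_lt hab
    set s' : Fin N → ℝ≥0 := fun i => s i + d * s₀ i with hs'
    have hsum' : ∑ i, μ i * s' i = b := by
      have : ∀ i, μ i * s' i = μ i * s i + d * (μ i * s₀ i) := by
        intro i; simp only [hs']; ring
      simp only [this]
      rw [Finset.sum_add_distrib, ← Finset.mul_sum, hs₀sum, hsum, mul_one, hd]
      exact add_tsub_cancel_of_le hab.le
    have hlt : ∑ i, β i (s i) < ∑ i, β i (s' i) := by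
      refine Finset.sum_lt_sum (fun i _ => (hβm i).monotone le_self_add) ⟨i0,
        Finset.mem_univ i0, ?_⟩
      apply hβm i0
      have : s' i0 = s i0 + d * (μ i0)⁻¹ := by simp [hs', hs₀]
      rw [this]
      exact lt_add_of_pos_right _ (mul_pos hdpos (inv_pos.2 (hμ i0)))
    calc barα a = ∑ i, β i (s i) := hval.symm
    _ < ∑ i, β i (s' i) := hlt
    _ ≤ barα b := (hgr b).2 ⟨s', hsum', rfl⟩
  -- vanishing at zero
  · obtain ⟨s, hsum, hval⟩ := (hgr 0).1
    have hz : ∀ i, s i = 0 := by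
      intro i
      have h0 : μ i * s i = 0 :=
        (Finset.sum_eq_zero_iff.1 hsum) i (Finset.mem_univ i)
      exact (mul_eq_zero.1 h0).resolve_left (hμ i).ne'
    rw [← hval]
    simp [hz, hβ0]
  -- unboundedness
  · have hle : ∀ r : ℝ≥0, β i0 (r * (μ i0)⁻¹) ≤ barα r := by
      intro r
      have hsum' : ∑ i, μ i * (r * s₀ i) = r := by
        calc ∑ i, μ i * (r * s₀ i) = r * ∑ i, μ i * s₀ i := by
              rw [Finset.mul_sum]; exact Finset.sum_congr rfl fun i _ => mul_left_comm _ _ _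
        _ = r := by rw [hs₀sum, mul_one]
      calc β i0 (r * (μ i0)⁻¹) = β i0 (r * s₀ i0) := by simp [hs₀]
      _ ≤ ∑ i, β i (r * s₀ i) := by
          exact Finset.single_le_sum (f := fun i => β i (r * s₀ i))
            (fun j _ => zero_le) (Finset.mem_univ i0)
      _ ≤ barα r := (hgr r).2 ⟨fun i => r * s₀ i, hsum', rfl⟩
    refine Filter.tendsto_atTop_mono hle ?_
    refine (hβtop i0).comp ?_
    refine Filter.tendsto_atTop_atTop_of_monotone (fun x y hxy => mul_le_mul_left hxy _) ?_
    intro c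
    exact ⟨c * μ i0, by rw [mul_assoc, mul_inv_cancel₀ (hμ i0).ne', mul_one]⟩
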